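/- Fix n, r ∈ ℕ with r ≥ 1 and let g_{k,r}^{KPM} = [(r−k+2) cos(πk/(r+2)) + sin(πk/(r+2)) cot(π/(r+2))]/(r+2) be the univariate minimum-resolution coefficients. The product kernel K(x,y) = ∏_{i=1}^n (1 + 2 Σ_{k=1}^r g_{k,r}^{KPM} T_k(x_i) T_k(y_i)) on [−1,1]^n × [−1,1]^n is a polynomial kernel of degree nr that is nonnegative on [−1,1]^n × [−1,1]^n, satisfies ∫_{[−1,1]^n} K(x,y) dμ(y) = 1 for all x, and has squared resolution ∫∫ ‖x−y‖² K(x,y) dμ(x) dμ(y) = n(1 − g_{1,r}^{KPM}) = n(1 − cos(π/(r+2))). -/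

import Mathlib

open MeasureTheory Real Finset
open intervalIntegral

noncomputable section

/-- The Chebyshev (arcsine) measure on ℝ, supported on [-1,1]. -/
def chebMeasure1 : Measure ℝ :=
  (volume.restrict (Set.Icc (-1 : ℝ) 1)).withDensity
    (fun x => ENNReal.ofReal ((π * Real.sqrt (1 - x ^ 2))⁻¹))

/-- The product Chebyshev measure on [-1,1]^n. -/
def chebMeasure (n : ℕ) : Measure (Fin n → ℝ) := Measure.pi fun _ => chebMeasure1

/-- The hypercube [-1,1]^n. -/
def box (n : ℕ) : Set (Fin n → ℝ) := Set.univ.pi fun _ => Set.Icc (-1 : ℝ) 1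

/-- Euclidean norm on ℝ^n. -/
def eNorm {n : ℕ} (x : Fin n → ℝ) : ℝ := Real.sqrt (∑ i, x i ^ 2)

/-- Chebyshev polynomial of the first kind, evaluated. -/
def T1 (k : ℕ) (x : ℝ) : ℝ := (Polynomial.Chebyshev.T ℝ (k : ℤ)).eval x

/-- Multivariate Chebyshev polynomial. -/
def Tm {n : ℕ} (α : Fin n → ℕ) (x : Fin n → ℝ) : ℝ := ∏ i, T1 (α i) (x i)

/-- The set ℕ^n_r of multi-indices of total degree at most r, as a finset. -/
def Nnr (n r : ℕ) : Finset (Fin n → ℕ) :=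
  (Fintype.piFinset fun _ => Finset.range (r + 1)).filter fun α => ∑ i, α i ≤ r

/-- Hamming weight: number of nonzero entries. -/
def ham {n : ℕ} (α : Fin n → ℕ) : ℕ := (Finset.univ.filter fun i => α i ≠ 0).card

/-- Modulus of continuity of `f` on the set `S`, w.r.t. the Euclidean norm. -/
def modCont {n : ℕ} (f : (Fin n → ℝ) → ℝ) (S : Set (Fin n → ℝ)) (δ : ℝ) : ℝ :=
  sSup {t : ℝ | ∃ x ∈ S, ∃ y ∈ S, eNorm (x - y) ≤ δ ∧ t = |f x - f y|}


section KPMAux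

lemma double_sum_diag (b h : ℕ → ℝ) (f : ℕ → ℕ → ℝ)
    (hsym : ∀ j l, f j l = f l j) (hdiff : ∀ j l, l ≤ j → f j l = h (j - l)) (N : ℕ) :
    ∑ j ∈ range N, ∑ l ∈ range N, b j * b l * f j l
      = ∑ k ∈ range N, (if k = 0 then 1 else 2) * (∑ j ∈ range (N - k), b j * b (j + k)) * h k := by
  induction N with
  | zero => simp
  | succ N ih =>
    have hf0 : f N N = h 0 := by rw [hdiff N N le_rfl, Nat.sub_self]
    have hLHS : ∑ j ∈ range (N+1), ∑ l ∈ range (N+1), b j * b l * f j l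
        = (∑ j ∈ range N, ∑ l ∈ range N, b j * b l * f j l)
          + (2 * ∑ j ∈ range N, b j * b N * h (N - j) + b N * b N * h 0) := by
      rw [Finset.sum_range_succ]
      have hin : ∀ j ∈ range N, (∑ l ∈ range (N+1), b j * b l * f j l)
          = (∑ l ∈ range N, b j * b l * f j l) + b j * b N * h (N - j) := by
        intro j hj
        rw [Finset.sum_range_succ, hsym j N, hdiff N j (mem_range.mp hj).le]
      rw [Finset.sum_congr rfl hin, Finset.sum_add_distrib, Finset.sum_range_succ, hf0]
      have hlast : ∀ l ∈ range N, b N * b l * f N l = b l * b N * h (N - l) := by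
        intro l hl
        rw [hdiff N l (mem_range.mp hl).le]; ring
      rw [Finset.sum_congr rfl hlast]
      ring
    have hkey : ∑ k ∈ range (N+1), (if k = 0 then (1:ℝ) else 2) * (b (N-k) * b N) * h k
        = 2 * ∑ j ∈ range N, b j * b N * h (N - j) + b N * b N * h 0 := by
      rw [Finset.sum_range_succ']
      have h0 : (if (0:ℕ) = 0 then (1:ℝ) else 2) * (b (N-0) * b N) * h 0 = b N * b N * h 0 := by
        simp
      rw [h0]
      congr 1
      have hterm : ∀ k ∈ range N, (if k + 1 = 0 then (1:ℝ) else 2) * (b (N-(k+1)) * b N) * h (k+1)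
          = 2 * (b (N-1-k) * b N * h (k+1)) := by
        intro k hk
        rw [if_neg (Nat.succ_ne_zero k), show N - (k+1) = N - 1 - k by omega]
        ring
      rw [Finset.sum_congr rfl hterm, ← Finset.mul_sum]
      congr 1
      have := Finset.sum_range_reflect (fun j => b j * b N * h (N - j)) N
      rw [← this]
      apply Finset.sum_congr rfl
      intro j hj
      have hj' := mem_range.mp hj
      rw [show N - (N - 1 - j) = j + 1 by omega]
    have hRHS : ∑ k ∈ range (N+1), (if k = 0 then (1:ℝ) else 2) * (∑ j ∈ range (N+1-k), b j * b (j+k)) * h k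
        = (∑ k ∈ range N, (if k = 0 then (1:ℝ) else 2) * (∑ j ∈ range (N-k), b j * b (j+k)) * h k)
          + ∑ k ∈ range (N+1), (if k = 0 then (1:ℝ) else 2) * (b (N-k) * b N) * h k := by
      rw [Finset.sum_range_succ, Finset.sum_range_succ (f := fun k => (if k = 0 then (1:ℝ) else 2) * (b (N-k) * b N) * h k)]
      have hsplit : ∀ k ∈ range N, (if k = 0 then (1:ℝ) else 2) * (∑ j ∈ range (N+1-k), b j * b (j+k)) * h k
          = (if k = 0 then (1:ℝ) else 2) * (∑ j ∈ range (N-k), b j * b (j+k)) * h k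
            + (if k = 0 then (1:ℝ) else 2) * (b (N-k) * b N) * h k := by
        intro k hk
        have hk' := mem_range.mp hk
        rw [show N + 1 - k = (N - k) + 1 by omega, Finset.sum_range_succ,
          show N - k + k = N by omega]
        ring
      rw [Finset.sum_congr rfl hsplit, Finset.sum_add_distrib]
      have hN : (∑ j ∈ range (N+1-N), b j * b (j+N)) = b 0 * b (0 + N) := by
        rw [show N + 1 - N = 1 by omega, Finset.sum_range_one]
      rw [hN, show N - N = 0 by omega, Nat.zero_add]
      ring
    rw [hLHS, hRHS, ih, hkey]

lemma sum_cos_AP (a d : ℝ) (N : ℕ) :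
    (∑ j ∈ range N, Real.cos (a + j * d)) * (2 * Real.sin (d/2))
      = Real.sin (a + N * d - d/2) - Real.sin (a - d/2) := by
  induction N with
  | zero => simp
  | succ N ih =>
    rw [Finset.sum_range_succ, add_mul, ih]
    have h2 : Real.cos (a + N*d) * (2 * Real.sin (d/2))
        = Real.sin (a + N*d + d/2) - Real.sin (a + N*d - d/2) := by
      rw [Real.sin_add, Real.sin_sub]; ring
    rw [h2, show a + ((N:ℕ)+1 : ℕ) * d - d/2 = a + N*d + d/2 by push_cast; ring]
    ring

lemma sumc_eq (r k : ℕ) (hk : k ≤ r + 1) :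
    ∑ j ∈ range (r + 1 - k), Real.sin (((j:ℝ)+1) * π / (r+2)) * Real.sin (((j:ℝ)+(k:ℝ)+1) * π / (r+2))
      = (((r + 1 - k : ℕ) : ℝ) * Real.cos ((k:ℝ) * π / (r+2))
         + Real.sin (((k:ℝ)+1) * π / (r+2)) / Real.sin (π / (r+2))) / 2 := by
  set M : ℝ := (r:ℝ) + 2 with hM
  have hMpos : 0 < M := by positivity
  have hsM : 0 < Real.sin (π / M) := by
    apply Real.sin_pos_of_pos_of_lt_pi
    · positivity
    · rw [div_lt_iff₀ hMpos]
      nlinarith [Real.pi_pos]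
  set N : ℕ := r + 1 - k with hN
  have hterm : ∀ j : ℕ, Real.sin (((j:ℝ)+1) * π / M) * Real.sin (((j:ℝ)+(k:ℝ)+1) * π / M)
      = (Real.cos ((k:ℝ) * π / M) - Real.cos (((k:ℝ)+2) * π / M + (j:ℝ) * (2 * π / M))) / 2 := by
    intro j
    have e1 : (k:ℝ) * π / M = ((j:ℝ)+(k:ℝ)+1) * π / M - ((j:ℝ)+1) * π / M := by ring
    have e2 : ((k:ℝ)+2) * π / M + (j:ℝ) * (2 * π / M)
        = ((j:ℝ)+(k:ℝ)+1) * π / M + ((j:ℝ)+1) * π / M := by ring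
    rw [e1, e2, Real.cos_sub, Real.cos_add]
    ring
  simp_rw [hterm]
  rw [← Finset.sum_div, Finset.sum_sub_distrib, Finset.sum_const, card_range]
  have hAP := sum_cos_AP (((k:ℝ)+2) * π / M) (2 * π / M) N
  have hd2 : (2 * π / M) / 2 = π / M := by ring
  rw [hd2] at hAP
  have hNc : (N:ℝ) = (r:ℝ) + 1 - (k:ℝ) := by
    rw [hN, Nat.cast_sub (by omega : k ≤ r + 1)]; push_cast; ring
  have harg1 : ((k:ℝ)+2) * π / M + (N:ℝ) * (2 * π / M) - π / M = 2 * π - ((k:ℝ)+1) * π / M := by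
    rw [hNc, hM]; field_simp; ring
  have harg2 : ((k:ℝ)+2) * π / M - π / M = ((k:ℝ)+1) * π / M := by ring
  have hsin2pi : Real.sin (2 * π - ((k:ℝ)+1) * π / M) = - Real.sin (((k:ℝ)+1) * π / M) := by
    rw [Real.sin_sub, Real.sin_two_pi, Real.cos_two_pi]; ring
  rw [harg1, harg2, hsin2pi] at hAP
  have hsum : (∑ j ∈ range N, Real.cos (((k:ℝ)+2) * π / M + (j:ℝ) * (2 * π / M)))
      = - Real.sin (((k:ℝ)+1) * π / M) / Real.sin (π / M) := by
    rw [eq_div_iff hsM.ne']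
    nlinarith [hAP]
  rw [hsum, nsmul_eq_mul]
  ring

lemma sq_expand (n : ℕ) (u : ℕ → ℝ) :
    (∑ j ∈ range n, u j)^2 = ∑ j ∈ range n, ∑ l ∈ range n, u j * u l := by
  rw [sq, Finset.sum_mul_sum]

lemma kernel_sq (r : ℕ) (θ φ : ℝ) :
    ∑ j ∈ range (r+1), ∑ l ∈ range (r+1),
        Real.sin (((j:ℝ)+1)*π/((r:ℝ)+2)) * Real.sin (((l:ℝ)+1)*π/((r:ℝ)+2)) *
          (Real.cos (((j:ℤ) - (l:ℤ) : ℤ) * θ) * Real.cos (((j:ℤ) - (l:ℤ) : ℤ) * φ))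
      = (∑ j ∈ range (r+1), Real.sin (((j:ℝ)+1)*π/((r:ℝ)+2)) * (Real.cos (j*θ) * Real.cos (j*φ)))^2
        + (∑ j ∈ range (r+1), Real.sin (((j:ℝ)+1)*π/((r:ℝ)+2)) * (Real.cos (j*θ) * Real.sin (j*φ)))^2
        + (∑ j ∈ range (r+1), Real.sin (((j:ℝ)+1)*π/((r:ℝ)+2)) * (Real.sin (j*θ) * Real.cos (j*φ)))^2
        + (∑ j ∈ range (r+1), Real.sin (((j:ℝ)+1)*π/((r:ℝ)+2)) * (Real.sin (j*θ) * Real.sin (j*φ)))^2 := by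
  rw [sq_expand, sq_expand, sq_expand, sq_expand, ← Finset.sum_add_distrib,
    ← Finset.sum_add_distrib, ← Finset.sum_add_distrib]
  apply Finset.sum_congr rfl
  intro j _
  rw [← Finset.sum_add_distrib, ← Finset.sum_add_distrib, ← Finset.sum_add_distrib]
  apply Finset.sum_congr rfl
  intro l _
  have hc : (((j:ℤ) - (l:ℤ) : ℤ) : ℝ) = (j:ℝ) - (l:ℝ) := by push_cast; ring
  rw [hc, show ((j:ℝ) - l) * θ = (j:ℝ)*θ - (l:ℝ)*θ by ring,
    show ((j:ℝ) - l) * φ = (j:ℝ)*φ - (l:ℝ)*φ by ring, Real.cos_sub, Real.cos_sub]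
  ring

lemma kernel_identity (r : ℕ) (hr : 1 ≤ r) (g : ℕ → ℝ)
    (hg : ∀ k, g k = (((r : ℝ) - k + 2) * Real.cos (π * k / (r + 2))
      + Real.sin (π * k / (r + 2)) * Real.cot (π / (r + 2))) / (r + 2)) (θ φ : ℝ) :
    1 + 2 * ∑ k ∈ Finset.Icc 1 r, g k * Real.cos (k * θ) * Real.cos (k * φ)
      = (2/((r:ℝ)+2)) * ∑ j ∈ range (r+1), ∑ l ∈ range (r+1),
          Real.sin (((j:ℝ)+1)*π/((r:ℝ)+2)) * Real.sin (((l:ℝ)+1)*π/((r:ℝ)+2)) *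
            (Real.cos (((j:ℤ) - (l:ℤ) : ℤ) * θ) * Real.cos (((j:ℤ) - (l:ℤ) : ℤ) * φ)) := by
  have hMpos : (0:ℝ) < (r:ℝ) + 2 := by positivity
  have hsM : 0 < Real.sin (π / ((r:ℝ)+2)) := by
    apply Real.sin_pos_of_pos_of_lt_pi
    · positivity
    · rw [div_lt_iff₀ hMpos]
      nlinarith [Real.pi_pos]
  set b : ℕ → ℝ := fun j => Real.sin (((j:ℝ)+1)*π/((r:ℝ)+2)) with hb
  set h : ℕ → ℝ := fun k => Real.cos (k * θ) * Real.cos (k * φ) with hh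
  set f : ℕ → ℕ → ℝ := fun j l =>
    Real.cos (((j:ℤ) - (l:ℤ) : ℤ) * θ) * Real.cos (((j:ℤ) - (l:ℤ) : ℤ) * φ) with hf
  have hsym : ∀ j l, f j l = f l j := by
    intro j l
    simp only [hf]
    have e1 : (((j:ℤ) - (l:ℤ) : ℤ) : ℝ) * θ = -( (((l:ℤ) - (j:ℤ) : ℤ) : ℝ) * θ) := by
      push_cast; ring
    have e2 : (((j:ℤ) - (l:ℤ) : ℤ) : ℝ) * φ = -( (((l:ℤ) - (j:ℤ) : ℤ) : ℝ) * φ) := by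
      push_cast; ring
    rw [e1, e2, Real.cos_neg, Real.cos_neg]
  have hdiff : ∀ j l, l ≤ j → f j l = h (j - l) := by
    intro j l hlj
    simp only [hf, hh]
    have e : (((j:ℤ) - (l:ℤ) : ℤ) : ℝ) = ((j - l : ℕ) : ℝ) := by
      push_cast [Nat.cast_sub hlj]; ring
    rw [e]
  rw [double_sum_diag b h f hsym hdiff]
  have hS : ∀ k, k ≤ r + 1 → (∑ j ∈ range (r+1-k), b j * b (j+k))
      = (((r + 1 - k : ℕ) : ℝ) * Real.cos ((k:ℝ) * π / ((r:ℝ)+2))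
         + Real.sin (((k:ℝ)+1) * π / ((r:ℝ)+2)) / Real.sin (π / ((r:ℝ)+2))) / 2 := by
    intro k hk
    rw [← sumc_eq r k hk]
    apply Finset.sum_congr rfl
    intro j _
    simp only [hb]
    congr 2
    push_cast; ring
  rw [Finset.sum_range_succ']
  have hS0 : (if (0:ℕ) = 0 then (1:ℝ) else 2) * (∑ j ∈ range (r+1-0), b j * b (j+0)) * h 0
      = ((r:ℝ) + 2) / 2 := by
    rw [if_pos rfl, hS 0 (by omega)]
    simp only [hh, Nat.cast_zero, zero_mul, mul_one, one_mul, Nat.sub_zero, Nat.add_zero]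
    rw [Real.cos_zero, zero_div, Real.cos_zero, zero_add, one_mul, div_self hsM.ne']
    push_cast
    ring
  rw [hS0]
  have hterm : ∀ k ∈ range r, (if k + 1 = 0 then (1:ℝ) else 2) * (∑ j ∈ range (r+1-(k+1)), b j * b (j+(k+1))) * h (k+1)
      = ((r:ℝ)+2) * g (k+1) * h (k+1) := by
    intro k hk
    have hk' : k + 1 ≤ r := by have := mem_range.mp hk; omega
    rw [if_neg (Nat.succ_ne_zero k), hS (k+1) (by omega), hg (k+1)]
    have hc : ((r + 1 - (k+1) : ℕ) : ℝ) = (r:ℝ) - (k+1) + 1 := by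
      rw [Nat.cast_sub (by omega)]; push_cast; ring
    have hsplit : Real.sin (((k:ℝ)+1+1) * π / ((r:ℝ)+2))
        = Real.sin (((k:ℝ)+1) * π / ((r:ℝ)+2)) * Real.cos (π / ((r:ℝ)+2))
          + Real.cos (((k:ℝ)+1) * π / ((r:ℝ)+2)) * Real.sin (π / ((r:ℝ)+2)) := by
      rw [← Real.sin_add]
      congr 1
      ring
    rw [hc, Real.cot_eq_cos_div_sin]
    push_cast
    rw [hsplit]
    have e1 : π * ((k:ℝ)+1) / ((r:ℝ)+2) = ((k:ℝ)+1) * π / ((r:ℝ)+2) := by ring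
    rw [e1]
    field_simp
    ring
  rw [Finset.sum_congr rfl hterm]
  have hIcc : ∑ k ∈ Finset.Icc 1 r, g k * Real.cos (k * θ) * Real.cos (k * φ)
      = ∑ k ∈ range r, g (k+1) * h (k+1) := by
    rw [show Finset.Icc 1 r = Finset.Ico 1 (r+1) by rw [Finset.Ico_add_one_right_eq_Icc],
      Finset.sum_Ico_eq_sum_range, show r + 1 - 1 = r from rfl]
    apply Finset.sum_congr rfl
    intro k _
    simp only [hh]
    rw [add_comm 1 k]
    ring
  have hx : 2/((r:ℝ)+2) * (((r:ℝ)+2)/2) = 1 := by field_simp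
  have hterm2 : ∀ k ∈ range r, 2 / ((r:ℝ)+2) * (((r:ℝ)+2) * g (k+1) * h (k+1))
      = 2 * (g (k+1) * h (k+1)) := by
    intro k _
    field_simp
  rw [hIcc, mul_add, hx, Finset.mul_sum, Finset.mul_sum, Finset.sum_congr rfl hterm2]
  ring

lemma kernel_nonneg_trig (r : ℕ) (hr : 1 ≤ r) (g : ℕ → ℝ)
    (hg : ∀ k, g k = (((r : ℝ) - k + 2) * Real.cos (π * k / (r + 2))
      + Real.sin (π * k / (r + 2)) * Real.cot (π / (r + 2))) / (r + 2)) (θ φ : ℝ) :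
    0 ≤ 1 + 2 * ∑ k ∈ Finset.Icc 1 r, g k * Real.cos (k * θ) * Real.cos (k * φ) := by
  rw [kernel_identity r hr g hg θ φ, kernel_sq]
  have h2 : (0:ℝ) ≤ 2/((r:ℝ)+2) := by positivity
  apply mul_nonneg h2
  positivity


lemma cheb_density_meas : Measurable fun x : ℝ => Real.toNNReal ((π * Real.sqrt (1 - x ^ 2))⁻¹) := by
  fun_prop

/-- Master change of variables for the Chebyshev measure. -/
lemma integral_cheb1 (f : ℝ → ℝ) :
    ∫ x, f x ∂chebMeasure1 = π⁻¹ * ∫ θ in (0:ℝ)..π, f (Real.cos θ) := by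
  have h1 : ∫ x, f x ∂chebMeasure1
      = ∫ x, ((π * Real.sqrt (1 - x ^ 2))⁻¹.toNNReal : ℝ) • f x
          ∂(volume.restrict (Set.Icc (-1:ℝ) 1)) :=
    integral_withDensity_eq_integral_smul₀ (cheb_density_meas.aemeasurable) f
  have h2 : ∀ x : ℝ, ((π * Real.sqrt (1 - x ^ 2))⁻¹.toNNReal : ℝ) • f x
      = (π * Real.sqrt (1 - x ^ 2))⁻¹ * f x := by
    intro x
    rw [smul_eq_mul, Real.coe_toNNReal]
    positivity
  have himg : Set.Icc (-1:ℝ) 1 = Real.cos '' Set.Icc 0 π := by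
    apply Set.Subset.antisymm
    · exact fun x hx => Real.surjOn_cos hx
    · rintro x ⟨θ, hθ, rfl⟩
      exact Real.cos_mem_Icc θ
  have h3 : ∫ x in Set.Icc (-1:ℝ) 1, (π * Real.sqrt (1 - x ^ 2))⁻¹ * f x
      = ∫ θ in Set.Icc (0:ℝ) π, |(-Real.sin θ)| • ((π * Real.sqrt (1 - (Real.cos θ) ^ 2))⁻¹ * f (Real.cos θ)) := by
    rw [himg]
    exact integral_image_eq_integral_abs_deriv_smul measurableSet_Icc
      (fun θ _ => (Real.hasDerivAt_cos θ).hasDerivWithinAt) Real.injOn_cos _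
  have h4 : ∫ θ in Set.Icc (0:ℝ) π, |(-Real.sin θ)| • ((π * Real.sqrt (1 - (Real.cos θ) ^ 2))⁻¹ * f (Real.cos θ))
      = ∫ θ in Set.Ioo (0:ℝ) π, π⁻¹ * f (Real.cos θ) := by
    rw [setIntegral_congr_set Ioo_ae_eq_Icc.symm]
    apply setIntegral_congr_fun measurableSet_Ioo
    intro θ hθ
    have hs : 0 < Real.sin θ := Real.sin_pos_of_pos_of_lt_pi hθ.1 hθ.2
    have : Real.sqrt (1 - Real.cos θ ^ 2) = Real.sin θ := by
      rw [show (1 : ℝ) - Real.cos θ ^ 2 = Real.sin θ ^ 2 by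
        have := Real.sin_sq_add_cos_sq θ; ring_nf; linarith]
      exact Real.sqrt_sq hs.le
    simp only [this, abs_neg, abs_of_pos hs, smul_eq_mul]
    field_simp
  rw [h1]
  simp_rw [h2]
  rw [h3, h4, intervalIntegral.integral_of_le Real.pi_pos.le,
    ← integral_Ioc_eq_integral_Ioo, ← MeasureTheory.integral_const_mul]

lemma cheb1_univ_toReal : (chebMeasure1 Set.univ).toReal = 1 := by
  have := integral_cheb1 (fun _ => (1:ℝ))
  simp only [MeasureTheory.integral_const, smul_eq_mul, mul_one,
    intervalIntegral.integral_const, sub_zero] at this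
  rwa [inv_mul_cancel₀ Real.pi_ne_zero] at this

instance cheb1_prob : IsProbabilityMeasure chebMeasure1 := by
  constructor
  have h := cheb1_univ_toReal
  by_cases ht : chebMeasure1 Set.univ = ⊤
  · rw [ht] at h; simp at h
  · rw [← ENNReal.ofReal_toReal ht, h]
    simp

lemma cheb1_compl_null : chebMeasure1 (Set.Icc (-1:ℝ) 1)ᶜ = 0 := by
  rw [chebMeasure1, withDensity_apply _ measurableSet_Icc.compl,
    Measure.restrict_restrict measurableSet_Icc.compl, Set.compl_inter_self]
  simp

lemma cheb1_ae_mem : ∀ᵐ x ∂chebMeasure1, x ∈ Set.Icc (-1:ℝ) 1 := by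
  have h : {x : ℝ | ¬ x ∈ Set.Icc (-1:ℝ) 1} = (Set.Icc (-1:ℝ) 1)ᶜ := rfl
  rw [ae_iff, h]; exact cheb1_compl_null

lemma integrable_cheb1 (f : ℝ → ℝ) (hf : Continuous f) : Integrable f chebMeasure1 := by
  obtain ⟨C, hC⟩ := (isCompact_Icc (a := (-1:ℝ)) (b := 1)).exists_bound_of_continuousOn
    hf.continuousOn
  refine Integrable.mono' (integrable_const C) hf.aestronglyMeasurable ?_
  filter_upwards [cheb1_ae_mem] with x hx
  exact hC x hx

lemma Icos (k : ℕ) : (∫ θ in (0:ℝ)..π, Real.cos (k * θ)) = if k = 0 then π else 0 := by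
  rcases Nat.eq_zero_or_pos k with hk | hk
  · simp [hk]
  · have hk0 : (k:ℝ) ≠ 0 := Nat.cast_ne_zero.mpr hk.ne'
    rw [if_neg hk.ne']
    have := intervalIntegral.integral_comp_mul_left (a := (0:ℝ)) (b := π)
      (fun x => Real.cos x) hk0
    rw [this]
    have h2 : (∫ x in ((k:ℝ)*0)..((k:ℝ)*π), Real.cos x) = Real.sin ((k:ℝ)*π) - Real.sin ((k:ℝ)*0) :=
      integral_cos
    simp only [h2]
    rw [show ((k:ℝ)*π) = ((k:ℕ):ℝ)*π from rfl, Real.sin_nat_mul_pi]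
    simp

lemma Icoscos_le {a b : ℕ} (hab : a ≤ b) :
    (∫ θ in (0:ℝ)..π, Real.cos (a * θ) * Real.cos (b * θ))
      = if a = b then (if a = 0 then π else π / 2) else 0 := by
  have key : ∀ θ : ℝ, Real.cos (a * θ) * Real.cos (b * θ)
      = (Real.cos ((↑(b + a)) * θ) + Real.cos ((↑(b - a)) * θ)) / 2 := by
    intro θ
    have h1 : ((b - a : ℕ) : ℝ) = (b : ℝ) - a := by
      push_cast [Nat.cast_sub hab]; ring
    push_cast [h1]
    rw [show ((b:ℝ) + a) * θ = b * θ + a * θ by ring,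
      show ((b:ℝ) - a) * θ = b * θ - a * θ by ring, Real.cos_add, Real.cos_sub]
    ring
  simp_rw [key]
  have i1 : IntervalIntegrable (fun θ : ℝ => Real.cos ((↑(b+a)) * θ)) volume 0 π :=
    (Real.continuous_cos.comp (continuous_const.mul continuous_id)).intervalIntegrable _ _
  have i2 : IntervalIntegrable (fun θ : ℝ => Real.cos ((↑(b-a)) * θ)) volume 0 π :=
    (Real.continuous_cos.comp (continuous_const.mul continuous_id)).intervalIntegrable _ _
  rw [intervalIntegral.integral_div, intervalIntegral.integral_add i1 i2, Icos, Icos]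
  rcases eq_or_ne a b with h | h
  · subst h
    rcases Nat.eq_zero_or_pos a with h0 | h0
    · simp [h0]
    · simp [h0.ne', Nat.sub_self]
  · have h1 : b + a ≠ 0 ∨ a = 0 := by omega
    have h2 : b - a ≠ 0 := by omega
    rcases Nat.eq_zero_or_pos (b + a) with h3 | h3
    · simp [h3, h2, h]; omega
    · simp [h3.ne', h2, h]; omega

lemma Icoscos (a b : ℕ) :
    (∫ θ in (0:ℝ)..π, Real.cos (a * θ) * Real.cos (b * θ))
      = if a = b then (if a = 0 then π else π / 2) else 0 := by
  rcases le_total a b with h | h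
  · exact Icoscos_le h
  · have : ∀ θ : ℝ, Real.cos ((a:ℝ) * θ) * Real.cos ((b:ℝ) * θ)
        = Real.cos ((b:ℝ) * θ) * Real.cos ((a:ℝ) * θ) := fun θ => mul_comm _ _
    simp_rw [this]
    rw [Icoscos_le h]
    by_cases hab : a = b <;> simp [hab, eq_comm]


lemma T1_cos (k : ℕ) (θ : ℝ) : T1 k (Real.cos θ) = Real.cos (k * θ) := by
  rw [T1, Polynomial.Chebyshev.T_real_cos]
  norm_num

lemma cont_T1 (k : ℕ) : Continuous (T1 k) := by
  unfold T1
  exact Polynomial.continuous _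

lemma T1_zero_eq (x : ℝ) : T1 0 x = 1 := by
  simp [T1, Polynomial.Chebyshev.T_zero]

lemma T1_one_eq (x : ℝ) : T1 1 x = x := by
  simp [T1, Polynomial.Chebyshev.T_one]

lemma T1_two_eq (x : ℝ) : T1 2 x = 2 * x ^ 2 - 1 := by
  have : ((2:ℕ) : ℤ) = 2 := rfl
  rw [T1, this, Polynomial.Chebyshev.T_two]
  simp [mul_comm]

lemma orthT (a b : ℕ) : ∫ t, T1 a t * T1 b t ∂chebMeasure1
    = if a = b then (if a = 0 then 1 else 1/2) else 0 := by
  rw [integral_cheb1 (fun t => T1 a t * T1 b t)]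
  simp_rw [T1_cos]
  rw [Icoscos]
  split_ifs <;> field_simp <;> simp

lemma intT (k : ℕ) : ∫ t, T1 k t ∂chebMeasure1 = if k = 0 then 1 else 0 := by
  rw [integral_cheb1 (fun t => T1 k t)]
  simp_rw [T1_cos]
  rw [Icos]
  split_ifs <;> field_simp <;> simp


lemma cheb1_sigmaFinite : SigmaFinite chebMeasure1 := inferInstance

lemma cheb_pi_integral {n : ℕ} (f : Fin n → ℝ → ℝ) :
    ∫ x, (∏ i, f i (x i)) ∂(chebMeasure n) = ∏ i, ∫ t, f i t ∂chebMeasure1 :=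
  MeasureTheory.integral_fintype_prod_eq_prod (E := fun _ => ℝ) f
    (μ := fun _ => chebMeasure1)

lemma cheb_pi_integrable {n : ℕ} (f : Fin n → ℝ → ℝ)
    (hf : ∀ i, Integrable (f i) chebMeasure1) :
    Integrable (fun x : Fin n → ℝ => ∏ i, f i (x i)) (chebMeasure n) :=
  MeasureTheory.Integrable.fintype_prod (μ := fun _ => chebMeasure1) hf

lemma int_T_kernel (r : ℕ) (c : ℕ → ℝ) (a : ℕ) :
    ∫ t, T1 a t * (1 + 2 * ∑ k ∈ Finset.Icc 1 r, c k * T1 k t) ∂chebMeasure1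
      = (if a = 0 then 1 else 0) + (if a ∈ Finset.Icc 1 r then c a else 0) := by
  have hpt : ∀ t, T1 a t * (1 + 2 * ∑ k ∈ Finset.Icc 1 r, c k * T1 k t)
      = T1 a t + ∑ k ∈ Finset.Icc 1 r, (2 * c k) * (T1 a t * T1 k t) := by
    intro t
    rw [mul_add, mul_one, Finset.mul_sum, Finset.mul_sum]
    congr 1
    apply Finset.sum_congr rfl
    intros; ring
  simp_rw [hpt]
  rw [integral_add (integrable_cheb1 _ (cont_T1 a))
    (integrable_finset_sum _ (fun k _ =>
      (integrable_cheb1 (fun t => T1 a t * T1 k t) ((cont_T1 a).mul (cont_T1 k))).const_mul _)),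
    integral_finset_sum _ (fun k _ =>
      (integrable_cheb1 (fun t => T1 a t * T1 k t) ((cont_T1 a).mul (cont_T1 k))).const_mul _), intT]
  congr 1
  have hterm : ∀ k ∈ Finset.Icc 1 r, (∫ t, (2 * c k) * (T1 a t * T1 k t) ∂chebMeasure1)
      = if k = a then c a else 0 := by
    intro k hk
    rw [MeasureTheory.integral_const_mul, orthT]
    rcases eq_or_ne a k with hak | hak
    · subst hak
      have ha0 : a ≠ 0 := by
        have := Finset.mem_Icc.mp hk; omega
      simp [ha0]
      ring
    · simp [hak, Ne.symm hak]
  rw [Finset.sum_congr rfl hterm, Finset.sum_ite_eq' (Finset.Icc 1 r) a (fun _ => c a)]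

lemma int_kernel_one (r : ℕ) (c : ℕ → ℝ) :
    ∫ t, (1 + 2 * ∑ k ∈ Finset.Icc 1 r, c k * T1 k t) ∂chebMeasure1 = 1 := by
  have h := int_T_kernel r c 0
  simp_rw [T1_zero_eq, one_mul] at h
  rw [h]
  have : (0:ℕ) ∉ Finset.Icc 1 r := by simp
  simp [this]

lemma cont_kernel (r : ℕ) (c : ℕ → ℝ) :
    Continuous fun t => 1 + 2 * ∑ k ∈ Finset.Icc 1 r, c k * T1 k t :=
  continuous_const.add (continuous_const.mul
    (continuous_finset_sum _ fun k _ => continuous_const.mul (cont_T1 k)))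

lemma int_const_cheb1 (c : ℝ) : ∫ _x, c ∂chebMeasure1 = c := by
  simp [measure_univ]

lemma Qval (r : ℕ) (hr : 1 ≤ r) (g : ℕ → ℝ) (s : ℝ) :
    ∫ t, (s - t)^2 * (1 + 2 * ∑ k ∈ Finset.Icc 1 r, g k * T1 k s * T1 k t) ∂chebMeasure1
      = (1 - 2 * g 1) * s^2 + (1 + (if 2 ∈ Finset.Icc 1 r then g 2 * T1 2 s else 0))/2 := by
  set K : ℝ → ℝ := fun t => 1 + 2 * ∑ k ∈ Finset.Icc 1 r, g k * T1 k s * T1 k t with hK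
  have hKcont : Continuous K := cont_kernel r _
  have hpt : ∀ t, (s - t)^2 * K t
      = s^2 * (T1 0 t * K t) + ((-2*s) * (T1 1 t * K t)
        + ((1/2) * (T1 0 t * K t) + (1/2) * (T1 2 t * K t))) := by
    intro t
    rw [T1_zero_eq, T1_one_eq, T1_two_eq]
    ring
  change ∫ t, (s - t)^2 * K t ∂chebMeasure1 = _
  simp_rw [hpt]
  have ig : ∀ a : ℕ, Integrable (fun t => T1 a t * K t) chebMeasure1 :=
    fun a => integrable_cheb1 _ ((cont_T1 a).mul hKcont)
  have hint : ∀ a : ℕ, (∫ t, T1 a t * K t ∂chebMeasure1)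
      = (if a = 0 then 1 else 0) + (if a ∈ Finset.Icc 1 r then g a * T1 a s else 0) := by
    intro a
    exact int_T_kernel r (fun k => g k * T1 k s) a
  have iA : Integrable (fun t => s^2 * (T1 0 t * K t)) chebMeasure1 := (ig 0).const_mul _
  have iB : Integrable (fun t => (-2*s) * (T1 1 t * K t)) chebMeasure1 := (ig 1).const_mul _
  have iC : Integrable (fun t => (1/2 : ℝ) * (T1 0 t * K t)) chebMeasure1 := (ig 0).const_mul _
  have iD : Integrable (fun t => (1/2 : ℝ) * (T1 2 t * K t)) chebMeasure1 := (ig 2).const_mul _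
  have iCD : Integrable (fun t => (1/2 : ℝ) * (T1 0 t * K t) + (1/2 : ℝ) * (T1 2 t * K t)) chebMeasure1 := iC.add iD
  have iBCD : Integrable (fun t => (-2*s) * (T1 1 t * K t) + ((1/2 : ℝ) * (T1 0 t * K t) + (1/2 : ℝ) * (T1 2 t * K t))) chebMeasure1 := iB.add iCD
  rw [integral_add iA iBCD, integral_add iB iCD, integral_add iC iD,
    MeasureTheory.integral_const_mul, MeasureTheory.integral_const_mul,
    MeasureTheory.integral_const_mul, MeasureTheory.integral_const_mul,
    hint 0, hint 1, hint 2]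
  have h0 : (0:ℕ) ∉ Finset.Icc 1 r := by simp
  have h1 : (1:ℕ) ∈ Finset.Icc 1 r := by simp [hr]
  rw [if_pos rfl, if_neg h0, if_neg (by norm_num : (1:ℕ) ≠ 0), if_pos h1,
    if_neg (by norm_num : (2:ℕ) ≠ 0), T1_one_eq]
  by_cases h2 : 2 ∈ Finset.Icc 1 r
  · rw [if_pos h2]
    ring
  · rw [if_neg h2]
    ring

lemma intQ (r : ℕ) (hr : 1 ≤ r) (g : ℕ → ℝ) :
    ∫ s, ((1 - 2 * g 1) * s^2 + (1 + (if 2 ∈ Finset.Icc 1 r then g 2 * T1 2 s else 0))/2)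
        ∂chebMeasure1 = 1 - g 1 := by
  have hsq : ∀ s : ℝ, s^2 = T1 1 s * T1 1 s := by
    intro s; rw [T1_one_eq]; ring
  by_cases h2 : 2 ∈ Finset.Icc 1 r
  · have hpt : ∀ s : ℝ, ((1 - 2 * g 1) * s^2 + (1 + (if 2 ∈ Finset.Icc 1 r then g 2 * T1 2 s else 0))/2)
        = (1 - 2 * g 1) * (T1 1 s * T1 1 s) + ((1:ℝ)/2 + (g 2 / 2) * T1 2 s) := by
      intro s
      rw [if_pos h2, hsq]
      ring
    simp_rw [hpt]
    have iA : Integrable (fun s => (1 - 2 * g 1) * (T1 1 s * T1 1 s)) chebMeasure1 :=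
      (integrable_cheb1 _ ((cont_T1 1).mul (cont_T1 1))).const_mul _
    have iC : Integrable (fun s : ℝ => (g 2 / 2) * T1 2 s) chebMeasure1 :=
      (integrable_cheb1 _ (cont_T1 2)).const_mul _
    have iBC : Integrable (fun s : ℝ => (1:ℝ)/2 + (g 2 / 2) * T1 2 s) chebMeasure1 :=
      (integrable_const _).add iC
    rw [integral_add iA iBC, integral_add (integrable_const _) iC,
      MeasureTheory.integral_const_mul, MeasureTheory.integral_const_mul,
      orthT 1 1, intT 2, int_const_cheb1]
    norm_num
    ring
  · have hpt : ∀ s : ℝ, ((1 - 2 * g 1) * s^2 + (1 + (if 2 ∈ Finset.Icc 1 r then g 2 * T1 2 s else 0))/2)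
        = (1 - 2 * g 1) * (T1 1 s * T1 1 s) + ((1:ℝ)/2 + 0 * T1 2 s) := by
      intro s
      rw [if_neg h2, hsq]
      ring
    simp_rw [hpt]
    have iA : Integrable (fun s => (1 - 2 * g 1) * (T1 1 s * T1 1 s)) chebMeasure1 :=
      (integrable_cheb1 _ ((cont_T1 1).mul (cont_T1 1))).const_mul _
    have iC : Integrable (fun s : ℝ => (0:ℝ) * T1 2 s) chebMeasure1 :=
      (integrable_cheb1 _ (cont_T1 2)).const_mul _
    have iBC : Integrable (fun s : ℝ => (1:ℝ)/2 + (0:ℝ) * T1 2 s) chebMeasure1 :=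
      (integrable_const _).add iC
    rw [integral_add iA iBC, integral_add (integrable_const _) iC,
      MeasureTheory.integral_const_mul, MeasureTheory.integral_const_mul,
      orthT 1 1, intT 2, int_const_cheb1]
    norm_num
    ring

end KPMAux

/-- The product of n univariate minimum-resolution (KPM) kernels of
degree r is a polynomial kernel of degree nr on [−1,1]ⁿ which is nonnegative,
normalized w.r.t. the product Chebyshev measure, and has squared resolution
n(1 − g₁) = n(1 − cos(π/(r+2))). -/
theorem product_KPM_kernel_properties (n r : ℕ) (hr : 1 ≤ r)
    (g : ℕ → ℝ)
    (hg : ∀ k, g k = (((r : ℝ) - k + 2) * Real.cos (π * k / (r + 2))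
      + Real.sin (π * k / (r + 2)) * Real.cot (π / (r + 2))) / (r + 2))
    (K : (Fin n → ℝ) → (Fin n → ℝ) → ℝ)
    (hK : ∀ x y, K x y = ∏ i,
      (1 + 2 * ∑ k ∈ Finset.Icc 1 r, g k * T1 k (x i) * T1 k (y i))) :
    (∃ c : (Fin n → ℕ) → ℝ, ∀ x y,
        K x y = ∑ α ∈ Nnr n (n * r), c α * Tm α x * Tm α y) ∧
    (∀ x ∈ box n, ∀ y ∈ box n, 0 ≤ K x y) ∧
    (∀ x, ∫ y, K x y ∂(chebMeasure n) = 1) ∧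
    (∫ x, ∫ y, eNorm (x - y) ^ 2 * K x y ∂(chebMeasure n) ∂(chebMeasure n)
        = n * (1 - g 1) ∧
      (n : ℝ) * (1 - g 1) = n * (1 - Real.cos (π / (r + 2)))) := by
  have hnR : (0:ℝ) < (r:ℝ) + 2 := by positivity
  have hsM : 0 < Real.sin (π / ((r:ℝ)+2)) := by
    apply Real.sin_pos_of_pos_of_lt_pi
    · positivity
    · rw [div_lt_iff₀ hnR]
      nlinarith [Real.pi_pos]
  refine ⟨?_, ?_, ?_, ?_, ?_⟩
  · -- Part 1: polynomial expansion
    classical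
    set e : ℕ → ℝ := fun k => if k = 0 then 1 else 2 * g k with he
    have hfac : ∀ s t : ℝ, (1 + 2 * ∑ k ∈ Finset.Icc 1 r, g k * T1 k s * T1 k t)
        = ∑ k ∈ Finset.range (r+1), e k * T1 k s * T1 k t := by
      intro s t
      have hrange : Finset.range (r+1) = insert 0 (Finset.Icc 1 r) := by
        ext k; simp only [Finset.mem_range, Finset.mem_insert, Finset.mem_Icc]; omega
      rw [hrange, Finset.sum_insert (by simp)]
      have h00 : e 0 * T1 0 s * T1 0 t = 1 := by simp [he, T1_zero_eq]
      rw [h00, Finset.mul_sum]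
      congr 1
      apply Finset.sum_congr rfl
      intro k hk
      have hk0 : k ≠ 0 := by have := Finset.mem_Icc.mp hk; omega
      simp only [he, if_neg hk0]
      ring
    refine ⟨fun α => if α ∈ Fintype.piFinset (fun _ : Fin n => Finset.range (r+1))
      then ∏ i, e (α i) else 0, ?_⟩
    intro x y
    rw [hK]
    simp_rw [hfac]
    rw [Finset.prod_univ_sum]
    have hsub : Fintype.piFinset (fun _ : Fin n => Finset.range (r+1)) ⊆ Nnr n (n*r) := by
      intro α hα
      rw [Fintype.mem_piFinset] at hα
      rw [Nnr, Finset.mem_filter]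
      constructor
      · rw [Fintype.mem_piFinset]
        intro i
        have h1 : α i < r + 1 := Finset.mem_range.mp (hα i)
        have h2 : 0 < n := i.pos
        have h3 : r ≤ n * r := Nat.le_mul_of_pos_left r h2
        rw [Finset.mem_range]
        omega
      · calc ∑ i, α i ≤ ∑ _i : Fin n, r := Finset.sum_le_sum (fun i _ => by
              have := Finset.mem_range.mp (hα i); omega)
          _ = n * r := by
              rw [Finset.sum_const, Finset.card_univ, Fintype.card_fin, smul_eq_mul]
    have hstep : ∀ α ∈ Fintype.piFinset (fun _ : Fin n => Finset.range (r+1)),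
        (∏ i, e (α i) * T1 (α i) (x i) * T1 (α i) (y i))
          = (if α ∈ Fintype.piFinset (fun _ : Fin n => Finset.range (r+1))
              then ∏ i, e (α i) else 0) * Tm α x * Tm α y := by
      intro α hα
      rw [if_pos hα, Tm, Tm, Finset.prod_mul_distrib, Finset.prod_mul_distrib]
    rw [Finset.sum_congr rfl hstep]
    exact Finset.sum_subset hsub (fun α _ hα => by rw [if_neg hα, zero_mul, zero_mul])
  · -- Part 2: nonnegativity
    intro x hx y hy
    rw [hK]
    apply Finset.prod_nonneg
    intro i _
    have hxi : x i ∈ Set.Icc (-1:ℝ) 1 := hx i (Set.mem_univ i)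
    have hyi : y i ∈ Set.Icc (-1:ℝ) 1 := hy i (Set.mem_univ i)
    have hcx : Real.cos (Real.arccos (x i)) = x i := Real.cos_arccos hxi.1 hxi.2
    have hcy : Real.cos (Real.arccos (y i)) = y i := Real.cos_arccos hyi.1 hyi.2
    have h := kernel_nonneg_trig r hr g hg (Real.arccos (x i)) (Real.arccos (y i))
    have hrwx : ∀ k : ℕ, Real.cos (k * Real.arccos (x i)) = T1 k (x i) := by
      intro k
      calc Real.cos (k * Real.arccos (x i))
          = T1 k (Real.cos (Real.arccos (x i))) := (T1_cos _ _).symm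
        _ = T1 k (x i) := by rw [hcx]
    have hrwy : ∀ k : ℕ, Real.cos (k * Real.arccos (y i)) = T1 k (y i) := by
      intro k
      calc Real.cos (k * Real.arccos (y i))
          = T1 k (Real.cos (Real.arccos (y i))) := (T1_cos _ _).symm
        _ = T1 k (y i) := by rw [hcy]
    simp_rw [hrwx, hrwy] at h
    exact h
  · -- Part 3: normalization
    intro x
    have heq : (fun y : Fin n → ℝ => K x y)
        = fun y => ∏ i, (1 + 2 * ∑ k ∈ Finset.Icc 1 r, g k * T1 k (x i) * T1 k (y i)) :=
      funext fun y => hK x y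
    rw [heq]
    rw [show (∫ y, (∏ i, (1 + 2 * ∑ k ∈ Finset.Icc 1 r, g k * T1 k (x i) * T1 k (y i)))
          ∂chebMeasure n)
        = ∏ i, ∫ t, (1 + 2 * ∑ k ∈ Finset.Icc 1 r, g k * T1 k (x i) * T1 k t) ∂chebMeasure1
      from cheb_pi_integral (fun i t => 1 + 2 * ∑ k ∈ Finset.Icc 1 r, g k * T1 k (x i) * T1 k t)]
    have hone : ∀ i ∈ Finset.univ,
        (∫ t, (1 + 2 * ∑ k ∈ Finset.Icc 1 r, g k * T1 k (x i) * T1 k t) ∂chebMeasure1) = 1 :=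
      fun i _ => int_kernel_one r _
    rw [Finset.prod_congr rfl hone, Finset.prod_const_one]
  · -- Part 4: squared resolution value
    classical
    set Qv : ℝ → ℝ := fun s => (1 - 2 * g 1) * s^2
      + (1 + (if 2 ∈ Finset.Icc 1 r then g 2 * T1 2 s else 0))/2 with hQv
    have hQcont : Continuous Qv := by
      rw [hQv]
      split_ifs with h2
      · exact ((continuous_const.mul (continuous_pow 2)).add
          ((continuous_const.add (continuous_const.mul (cont_T1 2))).div_const _))
      · exact ((continuous_const.mul (continuous_pow 2)).add
          ((continuous_const.add continuous_const).div_const _))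
    have hnorm : ∀ x y : Fin n → ℝ, eNorm (x - y)^2 * K x y
        = ∑ i, ((x i - y i)^2
            * ∏ j, (1 + 2 * ∑ k ∈ Finset.Icc 1 r, g k * T1 k (x j) * T1 k (y j))) := by
      intro x y
      rw [hK, eNorm, Real.sq_sqrt (Finset.sum_nonneg fun i _ => sq_nonneg _), Finset.sum_mul]
      apply Finset.sum_congr rfl
      intro i _
      rw [Pi.sub_apply]
    have hinner : ∀ x : Fin n → ℝ, (∫ y, eNorm (x - y)^2 * K x y ∂chebMeasure n)
        = ∑ i, Qv (x i) := by
      intro x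
      have h1 : (fun y : Fin n → ℝ => eNorm (x - y)^2 * K x y)
          = fun y => ∑ i, ((x i - y i)^2
              * ∏ j, (1 + 2 * ∑ k ∈ Finset.Icc 1 r, g k * T1 k (x j) * T1 k (y j))) :=
        funext fun y => hnorm x y
      rw [h1]
      set G : Fin n → Fin n → ℝ → ℝ := fun i j t => (if j = i then (x j - t)^2 else 1)
        * (1 + 2 * ∑ k ∈ Finset.Icc 1 r, g k * T1 k (x j) * T1 k t) with hG
      have hGcont : ∀ i j, Continuous (G i j) := by
        intro i j
        apply Continuous.mul
        · by_cases h : j = i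
          · simp only [hG, if_pos h]
            exact (continuous_const.sub continuous_id).pow 2
          · simp only [hG, if_neg h]
            exact continuous_const
        · exact cont_kernel r _
      have hGprod : ∀ (i : Fin n) (y : Fin n → ℝ), ((x i - y i)^2
          * ∏ j, (1 + 2 * ∑ k ∈ Finset.Icc 1 r, g k * T1 k (x j) * T1 k (y j)))
            = ∏ j, G i j (y j) := by
        intro i y
        simp only [hG]
        rw [Finset.prod_mul_distrib]
        congr 1
        rw [Finset.prod_ite_eq' Finset.univ i (fun j => (x j - y j)^2),
          if_pos (Finset.mem_univ i)]
      simp_rw [hGprod]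
      rw [integral_finset_sum _ (fun i _ =>
        cheb_pi_integrable (G i) (fun j => integrable_cheb1 _ (hGcont i j)))]
      apply Finset.sum_congr rfl
      intro i _
      rw [show (∫ y, (∏ j, G i j (y j)) ∂chebMeasure n)
          = ∏ j, ∫ t, G i j t ∂chebMeasure1 from cheb_pi_integral (G i)]
      have hj : ∀ j ∈ Finset.univ, (∫ t, G i j t ∂chebMeasure1)
          = if j = i then Qv (x j) else 1 := by
        intro j _
        by_cases h : j = i
        · rw [if_pos h]
          have hGj : G i j = fun t => (x j - t)^2
              * (1 + 2 * ∑ k ∈ Finset.Icc 1 r, g k * T1 k (x j) * T1 k t) := by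
            funext t; simp only [hG, if_pos h]
          rw [hGj, hQv]
          exact Qval r hr g (x j)
        · rw [if_neg h]
          have hGj : G i j
              = fun t => (1 + 2 * ∑ k ∈ Finset.Icc 1 r, g k * T1 k (x j) * T1 k t) := by
            funext t; simp only [hG, if_neg h, one_mul]
          rw [hGj]
          exact int_kernel_one r _
      rw [Finset.prod_congr rfl hj, Finset.prod_ite_eq' Finset.univ i (fun j => Qv (x j)),
        if_pos (Finset.mem_univ i)]
    have houter : (fun x : Fin n → ℝ => ∫ y, eNorm (x - y)^2 * K x y ∂chebMeasure n)
        = fun x => ∑ i, Qv (x i) := funext hinner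
    rw [houter]
    set H : Fin n → Fin n → ℝ → ℝ := fun i j t => if j = i then Qv t else 1 with hH
    have hHcont : ∀ i j, Continuous (H i j) := by
      intro i j
      by_cases h : j = i
      · simp only [hH, if_pos h]; exact hQcont
      · simp only [hH, if_neg h]; exact continuous_const
    have hHprod : ∀ (i : Fin n) (x : Fin n → ℝ), Qv (x i) = ∏ j, H i j (x j) := by
      intro i x
      simp only [hH]
      rw [Finset.prod_ite_eq' Finset.univ i (fun j => Qv (x j)), if_pos (Finset.mem_univ i)]
    have hQi : ∀ i : Fin n, (fun x : Fin n → ℝ => Qv (x i)) = fun x => ∏ j, H i j (x j) :=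
      fun i => funext fun x => hHprod i x
    rw [integral_finset_sum _ (fun i _ => by
      rw [hQi i]
      exact cheb_pi_integrable (H i) (fun j => integrable_cheb1 _ (hHcont i j)))]
    have hval : ∀ i ∈ Finset.univ, (∫ x, Qv (x i) ∂chebMeasure n) = 1 - g 1 := by
      intro i _
      rw [show (∫ x, Qv (x i) ∂chebMeasure n) = ∫ x, (∏ j, H i j (x j)) ∂chebMeasure n from by
          rw [hQi i],
        show (∫ x, (∏ j, H i j (x j)) ∂chebMeasure n) = ∏ j, ∫ t, H i j t ∂chebMeasure1
          from cheb_pi_integral (H i)]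
      have hj : ∀ j ∈ Finset.univ, (∫ t, H i j t ∂chebMeasure1)
          = if j = i then 1 - g 1 else 1 := by
        intro j _
        by_cases h : j = i
        · rw [if_pos h]
          have : H i j = Qv := by funext t; simp only [hH, if_pos h]
          rw [this, hQv]
          exact intQ r hr g
        · rw [if_neg h]
          have : H i j = fun _ => (1:ℝ) := by funext t; simp only [hH, if_neg h]
          rw [this]
          exact int_const_cheb1 1
      rw [Finset.prod_congr rfl hj, Finset.prod_ite_eq' Finset.univ i (fun _ => 1 - g 1),
        if_pos (Finset.mem_univ i)]
    rw [Finset.sum_congr rfl hval, Finset.sum_const, Finset.card_univ, Fintype.card_fin,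
      nsmul_eq_mul]
  · -- g 1 = cos(π/(r+2))
    have hg1 : g 1 = Real.cos (π / ((r:ℝ) + 2)) := by
      rw [hg 1, Real.cot_eq_cos_div_sin]
      push_cast
      rw [mul_one]
      field_simp
      ring
    rw [hg1]
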